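/- The integral over three copies of the unit sphere 𝕊² ⊂ ℝ³ of the reciprocal of the absolute value of the determinant diverges: ∫_{𝕊²} dω₁ ∫_{𝕊²} dω₂ ∫_{𝕊²} dω₃ |det(ω₁, ω₂, ω₃)|^{−1} = +∞, where det(ω₁, ω₂, ω₃) is the determinant of the 3×3 matrix with columns ω₁, ω₂, ω₃ and the integrals are with respect to the surface measure on 𝕊². -/

import Mathlib

noncomputable section

open MeasureTheory Complex Filter
open scoped ENNReal NNReal Real InnerProductSpace FourierTransform ComplexOrder

/-- Euclidean space `ℝ^d`. -/
abbrev Rd (d : ℕ) : Type := EuclideanSpace ℝ (Fin d)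

/-- The Hilbert space `L²(ℝ^d, ℂ)`. -/
abbrev L2 (d : ℕ) : Type := MeasureTheory.Lp ℂ 2 (volume : Measure (Rd d))

/-- `U` is the free Schrödinger propagator family `t ↦ e^{itΔ}` on `L²(ℝ^d)`: it is
(uniquely) characterized by the fact that for a Schwartz initial datum `f`, `(U t) f` is the
Schwartz function whose (Mathlib-normalized) Fourier transform is `e^{-4π²it|ξ|²} (𝓕 f)(ξ)`,
i.e. `U t` is the unitary Fourier multiplier with symbol `e^{-it|ξ|²}` in the
`(2π)^{-d/2} ∫ e^{-ix·ξ}` normalization of the Fourier transform. -/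
def IsSchrodingerPropagator {d : ℕ} (U : ℝ → (L2 d ≃ₗᵢ[ℂ] L2 d)) : Prop :=
  ∀ (t : ℝ) (f g : SchwartzMap (Rd d) ℂ) (u : L2 d),
    (u : Rd d → ℂ) =ᵐ[volume] f →
    (∀ ξ : Rd d, 𝓕 (g : Rd d → ℂ) ξ
        = Complex.exp (-(Complex.I * t * (4 * (π : ℂ) ^ 2 * (‖ξ‖ : ℂ) ^ 2))) * 𝓕 (f : Rd d → ℂ) ξ) →
    ((U t) u : Rd d → ℂ) =ᵐ[volume] g


section SphereDivAux

open Set Metric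

local notation "E3" => EuclideanSpace ℝ (Fin 3)

-- Lemma D (done above, copied)
lemma lemD : ∫⁻ t : ℝ, (ENNReal.ofReal |t|)⁻¹ * (Set.Icc (-(1/2):ℝ) (1/2)).indicator 1 t = ∞ := by
  have hmono : ∫⁻ t in Set.Ioc (0:ℝ) (1/2), (ENNReal.ofReal t)⁻¹ ≤
      ∫⁻ t : ℝ, (ENNReal.ofReal |t|)⁻¹ * (Set.Icc (-(1/2):ℝ) (1/2)).indicator 1 t := by
    rw [← lintegral_indicator measurableSet_Ioc]
    refine lintegral_mono fun t => ?_
    by_cases ht : t ∈ Set.Ioc (0:ℝ) (1/2)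
    · rw [Set.indicator_of_mem ht]
      have h1 : t ∈ Set.Icc (-(1/2):ℝ) (1/2) := ⟨by linarith [ht.1], ht.2⟩
      rw [Set.indicator_of_mem h1, abs_of_pos ht.1, Pi.one_apply, mul_one]
    · rw [Set.indicator_of_notMem ht]
      exact zero_le
  refine top_le_iff.mp (le_trans (le_of_eq ?_) hmono)
  symm
  by_contra hfin
  have hlt : ∫⁻ t in Set.Ioc (0:ℝ) (1/2), (ENNReal.ofReal t)⁻¹ < ∞ := lt_top_iff_ne_top.2 hfin
  have hae : ∀ᵐ t ∂(volume.restrict (Set.Ioc (0:ℝ) (1/2))), 0 ≤ t⁻¹ := by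
    filter_upwards [ae_restrict_mem measurableSet_Ioc] with t ht
    exact inv_nonneg.2 ht.1.le
  have hint : IntegrableOn (fun t : ℝ => t⁻¹) (Set.Ioc (0:ℝ) (1/2)) volume := by
    refine ⟨(measurable_inv).aestronglyMeasurable, ?_⟩
    rw [hasFiniteIntegral_iff_ofReal hae]
    refine lt_of_eq_of_lt ?_ hlt
    refine setLIntegral_congr_fun_ae measurableSet_Ioc (Filter.Eventually.of_forall fun t ht => ?_)
    rw [ENNReal.ofReal_inv_of_pos ht.1]
  have : IntervalIntegrable (fun t : ℝ => t⁻¹) volume 0 (1/2) :=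
    (intervalIntegrable_iff_integrableOn_Ioc_of_le (by norm_num)).2 hint
  rw [intervalIntegrable_inv_iff] at this
  rcases this with h | h
  · norm_num at h
  · exact h (by rw [Set.uIcc_of_le (by norm_num : (0:ℝ) ≤ 1/2)]; exact Set.left_mem_Icc.2 (by norm_num))

-- Lemma C
lemma lemC : ∫⁻ y : E3, (ENNReal.ofReal |y 0|)⁻¹ * ({z : E3 | ‖z‖ ≤ 1}).indicator 1 y = ∞ := by
  set g : ℝ → ℝ≥0∞ := fun t => (ENNReal.ofReal |t|)⁻¹ * (Set.Icc (-(1/2):ℝ) (1/2)).indicator 1 t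
    with hgdef
  set q : (Fin 2 → ℝ) → ℝ≥0∞ :=
    (Set.univ.pi fun _ : Fin 2 => Set.Icc (-(1/2):ℝ) (1/2)).indicator 1 with hqdef
  have hgm : Measurable g :=
    ((measurable_id.abs).ennreal_ofReal.inv).mul (measurable_one.indicator measurableSet_Icc)
  have hqm : Measurable q :=
    measurable_one.indicator (MeasurableSet.univ_pi fun _ => measurableSet_Icc)
  have hq1 : ∫⁻ z : Fin 2 → ℝ, q z = 1 := by
    rw [hqdef, lintegral_indicator_one (MeasurableSet.univ_pi fun _ => measurableSet_Icc),
      volume_pi_pi]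
    simp [Real.volume_Icc]
    norm_num
  have hprod : ∫⁻ p : ℝ × (Fin 2 → ℝ), g p.1 * q p.2 = ∞ := by
    rw [Measure.volume_eq_prod, lintegral_prod_mul hgm.aemeasurable hqm.aemeasurable, lemD, hq1, mul_one]
  have hm2 : Measurable fun p : ℝ × (Fin 2 → ℝ) => g p.1 * q p.2 :=
    (hgm.comp measurable_fst).mul (hqm.comp measurable_snd)
  have hpi : ∫⁻ x : Fin 3 → ℝ, g (x 0) * q (fun j => x ((0 : Fin 3).succAbove j)) = ∞ := by
    have := (volume_preserving_piFinSuccAbove (fun _ : Fin 3 => ℝ) 0).lintegral_comp hm2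
    rw [hprod] at this
    exact this
  have hm3 : Measurable fun x : Fin 3 → ℝ => g (x 0) * q (fun j => x ((0 : Fin 3).succAbove j)) :=
    (hgm.comp (measurable_pi_apply 0)).mul
      (hqm.comp (measurable_pi_iff.2 fun j => measurable_pi_apply _))
  have heq : ∫⁻ y : E3, g (y 0) * q (fun j => y ((0 : Fin 3).succAbove j)) = ∞ := by
    have := (EuclideanSpace.volume_preserving_symm_measurableEquiv_toLp (Fin 3)).lintegral_comp hm3
    rw [hpi] at this
    exact this
  refine top_le_iff.mp ?_
  rw [← heq]
  refine lintegral_mono fun y => ?_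
  by_cases h0 : y 0 ∈ Set.Icc (-(1/2):ℝ) (1/2)
  · by_cases hrest : (fun j => y ((0 : Fin 3).succAbove j)) ∈
        Set.univ.pi fun _ : Fin 2 => Set.Icc (-(1/2):ℝ) (1/2)
    · have hall : ∀ i : Fin 3, |y i| ≤ 1/2 := by
        intro i
        refine Fin.cases ?_ (fun j => ?_) i
        · exact abs_le.2 ⟨by linarith [h0.1], h0.2⟩
        · have := hrest j (Set.mem_univ j)
          simp only [Fin.zero_succAbove, Set.mem_Icc] at this
          exact abs_le.2 ⟨by linarith [this.1], this.2⟩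
      have hnorm : y ∈ {z : E3 | ‖z‖ ≤ 1} := by
        simp only [Set.mem_setOf_eq]
        rw [EuclideanSpace.norm_eq]
        refine Real.sqrt_le_one.mpr ?_
        calc ∑ i, ‖y i‖ ^ 2 ≤ ∑ _i : Fin 3, (1/2 : ℝ)^2 := by
              refine Finset.sum_le_sum fun i _ => ?_
              rw [Real.norm_eq_abs]
              have h := hall i
              have h2 := abs_nonneg (y i)
              nlinarith
          _ ≤ 1 := by norm_num
      rw [hgdef, hqdef]
      simp only [Set.indicator_of_mem h0, Set.indicator_of_mem hrest,
        Set.indicator_of_mem hnorm, Pi.one_apply, mul_one]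
      exact le_rfl
    · rw [hqdef]
      simp only [Set.indicator_of_notMem hrest, mul_zero]
      exact zero_le
  · rw [hgdef]
    simp only [Set.indicator_of_notMem h0, mul_zero, zero_mul]
    exact zero_le

lemma lemB (n : E3) (hn : n ≠ 0) :
    ∫⁻ x : E3, (ENNReal.ofReal |⟪n, x⟫_ℝ|)⁻¹ * ({z : E3 | ‖z‖ ≤ 1}).indicator 1 x = ∞ := by
  have hnn : (0:ℝ) < ‖n‖ := norm_pos_iff.2 hn
  set u : E3 := ‖n‖⁻¹ • n with hudef
  have hu : ‖u‖ = 1 := by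
    rw [hudef, norm_smul, norm_inv, norm_norm, inv_mul_cancel₀ hnn.ne']
  have hcard : Module.finrank ℝ E3 = Fintype.card (Fin 3) := by simp
  have horth : Orthonormal ℝ (({0} : Set (Fin 3)).restrict ![u, 0, 0]) := by
    constructor
    · rintro ⟨i, hi⟩
      have : i = 0 := hi
      subst this
      exact hu
    · rintro ⟨i, hi⟩ ⟨j, hj⟩ hne
      exact absurd (Subtype.ext ((Set.eq_of_mem_singleton hi).trans
        (Set.eq_of_mem_singleton hj).symm)) hne
  obtain ⟨b, hb⟩ := horth.exists_orthonormalBasis_extension_of_card_eq hcard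
  have hb0 : b 0 = u := by simpa using hb 0 rfl
  have hinner : ∀ x : E3, ⟪n, x⟫_ℝ = ‖n‖ * (b.repr x 0) := by
    intro x
    have h1 : b.repr x 0 = ⟪u, x⟫_ℝ := by rw [← hb0, b.repr_apply_apply]
    have h2 : n = ‖n‖ • u := by rw [hudef, smul_inv_smul₀ hnn.ne']
    rw [h1]
    conv_lhs => rw [h2]
    rw [real_inner_smul_left]
  set Φ : EuclideanSpace ℝ (Fin 3) → ℝ≥0∞ := fun y =>
    (ENNReal.ofReal (‖n‖ * |y 0|))⁻¹ * ({z : EuclideanSpace ℝ (Fin 3) | ‖z‖ ≤ 1}).indicator 1 y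
    with hΦdef
  have hym : Measurable fun y : EuclideanSpace ℝ (Fin 3) => y 0 :=
    (measurable_pi_apply 0).comp (MeasurableEquiv.toLp 2 (Fin 3 → ℝ)).symm.measurable
  have hballm : MeasurableSet {z : EuclideanSpace ℝ (Fin 3) | ‖z‖ ≤ 1} :=
    (isClosed_le continuous_norm continuous_const).measurableSet
  have hΦm : Measurable Φ :=
    ((hym.abs.const_mul _).ennreal_ofReal.inv).mul (measurable_one.indicator hballm)
  have hcomp : ∫⁻ x : E3, Φ (b.repr x) = ∫⁻ y : EuclideanSpace ℝ (Fin 3), Φ y :=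
    b.measurePreserving_repr.lintegral_comp hΦm
  have hptwise : ∀ x : E3,
      Φ (b.repr x) = (ENNReal.ofReal |⟪n, x⟫_ℝ|)⁻¹ * ({z : E3 | ‖z‖ ≤ 1}).indicator 1 x := by
    intro x
    rw [hΦdef]
    have habs : ‖n‖ * |b.repr x 0| = |⟪n, x⟫_ℝ| := by
      rw [hinner x, abs_mul, abs_of_pos hnn]
    simp only
    rw [habs]
    congr 1
    simp only [Set.indicator_apply, Pi.one_apply]
    have : b.repr x ∈ {z : EuclideanSpace ℝ (Fin 3) | ‖z‖ ≤ 1} ↔ x ∈ {z : E3 | ‖z‖ ≤ 1} := by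
      simp only [Set.mem_setOf_eq, LinearIsometryEquiv.norm_map]
    rw [if_congr this rfl rfl]
  have hΦtop : ∫⁻ y : EuclideanSpace ℝ (Fin 3), Φ y = ∞ := by
    have hsplit : ∀ y : EuclideanSpace ℝ (Fin 3),
        Φ y = (ENNReal.ofReal ‖n‖)⁻¹ *
          ((ENNReal.ofReal |y 0|)⁻¹ * ({z : EuclideanSpace ℝ (Fin 3) | ‖z‖ ≤ 1}).indicator 1 y) := by
      intro y
      rw [hΦdef]
      simp only
      rw [ENNReal.ofReal_mul hnn.le,
        ENNReal.mul_inv (Or.inl (by simpa using hnn)) (Or.inl ENNReal.ofReal_ne_top), mul_assoc]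
    rw [lintegral_congr hsplit,
      lintegral_const_mul (f := fun y : E3 => (ENNReal.ofReal |y 0|)⁻¹ * ({z : E3 | ‖z‖ ≤ 1}).indicator 1 y)
        _ (((hym.abs).ennreal_ofReal.inv).mul (measurable_one.indicator hballm)),
      lemC, ENNReal.mul_top (by simp [ENNReal.inv_ne_zero])]
  rw [← lintegral_congr hptwise, hcomp, hΦtop]

lemma lemA (n : E3) (hn : n ≠ 0) :
    ∫⁻ ω : Metric.sphere (0 : E3) 1, (ENNReal.ofReal |⟪n, (ω : E3)⟫_ℝ|)⁻¹
      ∂(volume : Measure E3).toSphere = ∞ := by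
  set μ : Measure E3 := volume with hμdef
  set G : Metric.sphere (0 : E3) 1 → ℝ≥0∞ :=
    fun ω => (ENNReal.ofReal |⟪n, (ω : E3)⟫_ℝ|)⁻¹ with hG
  set H : Set.Ioi (0:ℝ) → ℝ≥0∞ :=
    fun r => (ENNReal.ofReal r.1)⁻¹ * (Set.Iic (1:ℝ)).indicator 1 r.1 with hH
  have hGm : Measurable G :=
    ((Continuous.inner continuous_const continuous_subtype_val).abs.measurable.ennreal_ofReal).inv
  have hHm : Measurable H :=
    ((measurable_subtype_coe.ennreal_ofReal).inv).mul
      ((measurable_one.indicator measurableSet_Iic).comp measurable_subtype_coe)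
  have hGHm : Measurable fun p : Metric.sphere (0:E3) 1 × Set.Ioi (0:ℝ) => G p.1 * H p.2 :=
    (hGm.comp measurable_fst).mul (hHm.comp measurable_snd)
  set F : E3 → ℝ≥0∞ :=
    fun x => (ENNReal.ofReal |⟪n, x⟫_ℝ|)⁻¹ * ({z : E3 | ‖z‖ ≤ 1}).indicator 1 x with hF
  have hdim : Module.finrank ℝ E3 - 1 = 2 := by simp
  have hmp := μ.measurePreserving_homeomorphUnitSphereProd
  rw [hdim] at hmp
  have step1 : ∫⁻ p : Metric.sphere (0:E3) 1 × Set.Ioi (0:ℝ), G p.1 * H p.2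
      ∂(μ.toSphere.prod (Measure.volumeIoiPow 2)) = ∫⁻ x, F x ∂μ := by
    rw [← hmp.lintegral_comp hGHm]
    have hpt : ∀ x : ({(0:E3)}ᶜ : Set E3),
        G ((homeomorphUnitSphereProd E3) x).1 * H ((homeomorphUnitSphereProd E3) x).2
          = F x.1 := by
      intro x
      have hx0 : x.1 ≠ 0 := x.2
      have hxpos : (0:ℝ) < ‖x.1‖ := norm_pos_iff.2 hx0
      rw [hG, hH, hF]
      simp only [homeomorphUnitSphereProd_apply_fst_coe, homeomorphUnitSphereProd_apply_snd_coe]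
      rw [real_inner_smul_right, abs_mul, abs_inv, abs_norm]
      have hA : (ENNReal.ofReal (‖x.1‖⁻¹ * |⟪n, x.1⟫_ℝ|))⁻¹
          = ENNReal.ofReal ‖x.1‖ * (ENNReal.ofReal |⟪n, x.1⟫_ℝ|)⁻¹ := by
        rw [ENNReal.ofReal_mul (inv_nonneg.2 hxpos.le), ENNReal.ofReal_inv_of_pos hxpos,
          ENNReal.mul_inv (Or.inr ENNReal.ofReal_ne_top)
            (Or.inl (ENNReal.inv_ne_top.2 (ENNReal.ofReal_pos.2 hxpos).ne')), inv_inv]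
      rw [hA]
      have hind : (Set.Iic (1:ℝ)).indicator (1 : ℝ → ℝ≥0∞) ‖x.1‖
          = ({z : E3 | ‖z‖ ≤ 1}).indicator 1 x.1 := by
        simp only [Set.indicator_apply, Set.mem_Iic, Set.mem_setOf_eq, Pi.one_apply]
      rw [hind, mul_mul_mul_comm,
        ENNReal.mul_inv_cancel (ENNReal.ofReal_pos.2 hxpos).ne' ENNReal.ofReal_ne_top, one_mul]
    rw [lintegral_congr hpt,
      lintegral_subtype_comap (measurableSet_singleton (0:E3)).compl F,
      restrict_compl_singleton]
  have step2 : ∫⁻ x, F x ∂μ = ∞ := lemB n hn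
  have hc : ∫⁻ r, H r ∂(Measure.volumeIoiPow 2) ≠ ∞ := by
    have hdens : Measurable fun r : Set.Ioi (0:ℝ) => ENNReal.ofReal (r.1 ^ 2) :=
      (measurable_subtype_coe.pow_const 2).ennreal_ofReal
    have h1 : ∫⁻ r, H r ∂(Measure.volumeIoiPow 2)
        = ∫⁻ r : Set.Ioi (0:ℝ),
            (fun t : ℝ => ENNReal.ofReal (t^2) *
              ((ENNReal.ofReal t)⁻¹ * (Set.Iic (1:ℝ)).indicator 1 t)) r.1
            ∂(Measure.comap Subtype.val volume) := by
      rw [Measure.volumeIoiPow, lintegral_withDensity_eq_lintegral_mul _ hdens hHm]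
      exact lintegral_congr fun r => rfl
    have h1' := h1.trans (lintegral_subtype_comap measurableSet_Ioi
      (fun t : ℝ => ENNReal.ofReal (t^2) * ((ENNReal.ofReal t)⁻¹ * (Set.Iic (1:ℝ)).indicator 1 t)))
    rw [h1']
    have h2 : (∫⁻ t in Set.Ioi (0:ℝ),
        ENNReal.ofReal (t^2) * ((ENNReal.ofReal t)⁻¹ * (Set.Iic (1:ℝ)).indicator 1 t))
        ≤ ∫⁻ t in Set.Ioi (0:ℝ), (Set.Iic (1:ℝ)).indicator 1 t := by
      refine setLIntegral_mono' measurableSet_Ioi fun t ht => ?_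
      have htpos : (0:ℝ) < t := ht
      by_cases h1t : t ≤ 1
      · have heq : ENNReal.ofReal (t^2) * ((ENNReal.ofReal t)⁻¹ * (Set.Iic (1:ℝ)).indicator 1 t)
            = ENNReal.ofReal t * (Set.Iic (1:ℝ)).indicator 1 t := by
          rw [pow_two, ENNReal.ofReal_mul htpos.le, mul_mul_mul_comm,
            ENNReal.mul_inv_cancel (ENNReal.ofReal_pos.2 htpos).ne' ENNReal.ofReal_ne_top,
            one_mul]
        rw [heq]
        calc ENNReal.ofReal t * (Set.Iic (1:ℝ)).indicator 1 t
            ≤ 1 * (Set.Iic (1:ℝ)).indicator 1 t :=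
              mul_le_mul_left (ENNReal.ofReal_le_one.2 h1t) _
          _ = (Set.Iic (1:ℝ)).indicator 1 t := one_mul _
      · rw [Set.indicator_of_notMem (by simpa using h1t), mul_zero, mul_zero]
    have h3 : (∫⁻ t in Set.Ioi (0:ℝ), (Set.Iic (1:ℝ)).indicator 1 t) = (1 : ℝ≥0∞) := by
      rw [lintegral_indicator measurableSet_Iic, Measure.restrict_restrict measurableSet_Iic]
      simp only [Pi.one_apply]
      rw [setLIntegral_one, Set.Iic_inter_Ioi, Real.volume_Ioc]
      norm_num
    refine ne_top_of_le_ne_top ?_ h2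
    rw [h3]
    exact ENNReal.one_ne_top
  have hmain : (∫⁻ ω, G ω ∂μ.toSphere) * (∫⁻ r, H r ∂(Measure.volumeIoiPow 2)) = ∞ := by
    rw [← lintegral_prod_mul hGm.aemeasurable hHm.aemeasurable, step1, step2]
  by_contra hne
  exact absurd hmain (ENNReal.mul_ne_top hne hc)


end SphereDivAux

/-- **Divergence of the inverse-determinant integral on the sphere** (used in the proof of
Proposition 2):  `∫_{𝕊²}∫_{𝕊²}∫_{𝕊²} |det(ω₁, ω₂, ω₃)|⁻¹ dω₁ dω₂ dω₃ = +∞`, where the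
integrals are with respect to the surface measure on `𝕊² ⊆ ℝ³`. -/
theorem sphere_det_integral_diverges :
    (∫⁻ ω₁ : Metric.sphere (0 : Rd 3) 1,
      ∫⁻ ω₂ : Metric.sphere (0 : Rd 3) 1,
        ∫⁻ ω₃ : Metric.sphere (0 : Rd 3) 1,
          (ENNReal.ofReal
            |Matrix.det (Matrix.of fun i j : Fin 3 =>
              (![((ω₁ : Rd 3)), ((ω₂ : Rd 3)), ((ω₃ : Rd 3))] j) i)|)⁻¹
          ∂(volume : Measure (Rd 3)).toSphere
        ∂(volume : Measure (Rd 3)).toSphere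
      ∂(volume : Measure (Rd 3)).toSphere) = ∞ := by
  have hμ0 : (volume : Measure (Rd 3)).toSphere Set.univ ≠ 0 := by
    rw [Measure.toSphere_apply_univ]
    exact mul_ne_zero (by simp) (Metric.measure_ball_pos volume (0:(Rd 3)) one_pos).ne'
  have key : ∀ ω₁ ω₂ : Metric.sphere (0 : (Rd 3)) 1,
      (∫⁻ ω₃ : Metric.sphere (0 : (Rd 3)) 1,
        (ENNReal.ofReal
          |Matrix.det (Matrix.of fun i j : Fin 3 =>
            (![((ω₁ : (Rd 3))), ((ω₂ : (Rd 3))), ((ω₃ : (Rd 3)))] j) i)|)⁻¹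
        ∂(volume : Measure (Rd 3)).toSphere) = ∞ := by
    intro ω₁ ω₂
    set a : (Rd 3) := (ω₁ : (Rd 3)) with ha
    set b : (Rd 3) := (ω₂ : (Rd 3)) with hbd
    set n : (Rd 3) := (WithLp.equiv 2 (Fin 3 → ℝ)).symm
      ![a 1 * b 2 - a 2 * b 1, a 2 * b 0 - a 0 * b 2, a 0 * b 1 - a 1 * b 0] with hndef
    have hdet : ∀ c : (Rd 3),
        Matrix.det (Matrix.of fun i j : Fin 3 => (![a, b, c] j) i) = ⟪n, c⟫_ℝ := by
      intro c
      rw [Matrix.det_fin_three, PiLp.inner_apply]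
      simp only [Matrix.of_apply, Matrix.cons_val_zero, Matrix.cons_val_one, Matrix.head_cons,
        Matrix.cons_val_two, Matrix.tail_cons, hndef, WithLp.equiv_symm_apply, WithLp.ofLp_toLp,
        Fin.sum_univ_three, RCLike.inner_apply, conj_trivial]
      ring
    have hcong : (∫⁻ ω₃ : Metric.sphere (0 : (Rd 3)) 1,
        (ENNReal.ofReal
          |Matrix.det (Matrix.of fun i j : Fin 3 =>
            (![a, b, ((ω₃ : (Rd 3)))] j) i)|)⁻¹
        ∂(volume : Measure (Rd 3)).toSphere)
        = ∫⁻ ω₃ : Metric.sphere (0 : (Rd 3)) 1,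
            (ENNReal.ofReal |⟪n, (ω₃ : (Rd 3))⟫_ℝ|)⁻¹ ∂(volume : Measure (Rd 3)).toSphere :=
      lintegral_congr fun ω₃ => by rw [hdet (ω₃ : (Rd 3))]
    rw [hcong]
    by_cases hn : n = 0
    · have hall : ∀ ω₃ : Metric.sphere (0 : (Rd 3)) 1,
          (ENNReal.ofReal |⟪n, (ω₃ : (Rd 3))⟫_ℝ|)⁻¹ = ∞ := by
        intro ω₃
        rw [hn, inner_zero_left]
        simp
      rw [lintegral_congr hall, lintegral_const]
      exact ENNReal.top_mul hμ0
    · exact lemA n hn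
  have mid : ∀ ω₁ : Metric.sphere (0 : (Rd 3)) 1,
      (∫⁻ ω₂ : Metric.sphere (0 : (Rd 3)) 1,
        ∫⁻ ω₃ : Metric.sphere (0 : (Rd 3)) 1,
          (ENNReal.ofReal
            |Matrix.det (Matrix.of fun i j : Fin 3 =>
              (![((ω₁ : (Rd 3))), ((ω₂ : (Rd 3))), ((ω₃ : (Rd 3)))] j) i)|)⁻¹
          ∂(volume : Measure (Rd 3)).toSphere
        ∂(volume : Measure (Rd 3)).toSphere) = ∞ := by
    intro ω₁
    rw [lintegral_congr fun ω₂ => key ω₁ ω₂, lintegral_const]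
    exact ENNReal.top_mul hμ0
  rw [lintegral_congr mid, lintegral_const]
  exact ENNReal.top_mul hμ0
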